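/- Let α, β be complex numbers with |α| ≥ |β|, let p be an odd prime dividing a positive integer n, and suppose |α^{n/p} + β^{n/p}| ≤ (2/p)·|α|^{n/p} and α^{n/p} + β^{n/p} ≠ 0. Then |α^n + β^n| ≥ |α^{n/p} + β^{n/p}| · |α|^{n(p−1)/p}. -/

import Mathlib

open Finset

lemma aux_geom_lb (p : ℕ) (hp : 0 < p) (w : ℂ) (hw : ‖w‖ ≤ 1)
    (h1 : ‖1 - w‖ ≤ 2 / p) :
    1 ≤ ‖∑ k ∈ Finset.range p, w ^ k‖ := by
  have hone : ∀ k : ℕ, ‖1 - w ^ k‖ ≤ k * ‖1 - w‖ := by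
    intro k
    have hg : 1 - w ^ k = (∑ i ∈ Finset.range k, w ^ i) * (1 - w) := by
      linear_combination geom_sum_mul w k
    rw [hg, norm_mul]
    have hsle : ‖∑ i ∈ Finset.range k, w ^ i‖ ≤ k := by
      calc ‖∑ i ∈ Finset.range k, w ^ i‖
          ≤ ∑ i ∈ Finset.range k, ‖w ^ i‖ :=
            norm_sum_le _ _
        _ ≤ ∑ i ∈ Finset.range k, 1 := by
            apply Finset.sum_le_sum
            intro i _
            rw [norm_pow]
            exact pow_le_one₀ (norm_nonneg w) hw
        _ = k := by simp
    exact mul_le_mul_of_nonneg_right hsle (norm_nonneg _)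
  have hre : ∀ k : ℕ, (1 : ℝ) - 2 / p * k ≤ (w ^ k).re := by
    intro k
    have h2 : (1 : ℝ) - (w ^ k).re ≤ ‖1 - w ^ k‖ := by
      calc (1:ℝ) - (w ^ k).re = (1 - w ^ k).re := by simp
        _ ≤ ‖1 - w ^ k‖ := Complex.re_le_norm _
    have h3 : ‖1 - w ^ k‖ ≤ k * (2 / p) :=
      le_trans (hone k) (mul_le_mul_of_nonneg_left h1 (by positivity))
    nlinarith [h2, h3]
  have hsum : (1 : ℝ) ≤ (∑ k ∈ Finset.range p, w ^ k).re := by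
    rw [Complex.re_sum]
    have hcalc : ∑ k ∈ Finset.range p, ((1:ℝ) - 2 / p * k) = 1 := by
      rw [Finset.sum_sub_distrib, Finset.sum_const, Finset.card_range, ← Finset.mul_sum]
      have hgauss : (∑ k ∈ Finset.range p, (k : ℝ)) = p * (p - 1) / 2 := by
        have h := Finset.sum_range_id_mul_two p
        have h' : (∑ i ∈ Finset.range p, (i : ℝ)) * 2 = (p : ℝ) * ((p : ℝ) - 1) := by
          have hc := congrArg (Nat.cast (R := ℝ)) h
          push_cast [Nat.cast_sub hp] at hc
          convert hc using 2 <;> push_cast <;> ring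
        linarith [h']
      rw [hgauss]
      have hp0 : (p : ℝ) ≠ 0 := Nat.cast_ne_zero.mpr hp.ne'
      field_simp
      ring
    calc (1:ℝ) = ∑ k ∈ Finset.range p, ((1:ℝ) - 2 / p * k) := hcalc.symm
      _ ≤ ∑ k ∈ Finset.range p, (w ^ k).re := Finset.sum_le_sum (fun k _ => hre k)
  exact le_trans hsum (Complex.re_le_norm _)

theorem stmt_7 (α β : ℂ) (hab : ‖β‖ ≤ ‖α‖)
    (p n : ℕ) (hp : p.Prime) (hodd : Odd p) (hn : 0 < n) (hdvd : p ∣ n)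
    (hsmall : ‖α ^ (n / p) + β ^ (n / p)‖ ≤ 2 / p * ‖α‖ ^ (n / p))
    (hne : α ^ (n / p) + β ^ (n / p) ≠ 0) :
    ‖α ^ (n / p) + β ^ (n / p)‖ * ‖α‖ ^ ((n / p) * (p - 1)) ≤
      ‖α ^ n + β ^ n‖ := by
  have hp1 : 0 < p := hp.pos
  set m := n / p with hm
  have hmp : m * p = n := Nat.div_mul_cancel hdvd
  have hm0 : 0 < m := Nat.div_pos (Nat.le_of_dvd hn hdvd) hp1
  have hα : α ≠ 0 := by
    intro h
    have hβ : β = 0 := by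
      rw [h] at hab
      simpa using norm_eq_zero.mp (le_antisymm (by simpa using hab) (norm_nonneg β))
    exact hne (by simp [h, hβ, zero_pow hm0.ne'])
  set x := α ^ m with hxdef
  set y := β ^ m with hydef
  have hx0 : x ≠ 0 := pow_ne_zero _ hα
  have hxabs : ‖x‖ = ‖α‖ ^ m := norm_pow _ _
  have hxpos : 0 < ‖x‖ := norm_pos_iff.mpr hx0
  set w : ℂ := -y / x with hwdef
  have hw : ‖w‖ ≤ 1 := by
    rw [hwdef, norm_div, norm_neg, div_le_one hxpos, hxabs, hydef, norm_pow]
    exact pow_le_pow_left₀ (norm_nonneg β) hab m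
  have h1w : ‖1 - w‖ ≤ 2 / p := by
    have heq : (1 : ℂ) - w = (x + y) / x := by
      rw [hwdef, eq_div_iff hx0, sub_mul, div_mul_cancel₀ _ hx0]
      ring
    rw [heq, norm_div, div_le_iff₀ hxpos, hxabs]
    exact hsmall
  have hkey := aux_geom_lb p hp1 w hw h1w
  have hxw : -y = x * w := by
    rw [hwdef, mul_div_assoc', eq_div_iff hx0]
    ring
  have hid : α ^ n + β ^ n = (x ^ (p - 1) * ∑ k ∈ Finset.range p, w ^ k) * (x + y) := by
    have hg := geom_sum₂_mul x (-y) p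
    have hyp : (-y) ^ p = -(y ^ p) := hodd.neg_pow y
    have hxp : x ^ p = α ^ n := by rw [hxdef, ← pow_mul, hmp]
    have hypn : y ^ p = β ^ n := by rw [hydef, ← pow_mul, hmp]
    have hterm : ∑ i ∈ Finset.range p, x ^ i * (-y) ^ (p - 1 - i)
        = x ^ (p - 1) * ∑ k ∈ Finset.range p, w ^ k := by
      rw [Finset.mul_sum]
      rw [← Finset.sum_range_reflect (fun k => x ^ (p - 1) * w ^ k) p]
      apply Finset.sum_congr rfl
      intro i hi
      have hile : i ≤ p - 1 := Nat.le_pred_of_lt (Finset.mem_range.mp hi)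
      rw [hxw, mul_pow, ← mul_assoc, ← pow_add]
      congr 2
      omega
    rw [hterm] at hg
    rw [hyp] at hg
    rw [hxp, hypn] at hg
    rw [sub_neg_eq_add, sub_neg_eq_add] at hg
    exact hg.symm
  rw [hid, norm_mul, norm_mul, norm_pow, pow_mul, ← hxabs]
  have h0 : 0 ≤ ‖x + y‖ := norm_nonneg _
  have h1 : 0 ≤ ‖x‖ ^ (p - 1) := pow_nonneg (norm_nonneg x) (p - 1)
  calc ‖x + y‖ * ‖x‖ ^ (p - 1)
      = ‖x‖ ^ (p - 1) * 1 * ‖x + y‖ := by ring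
    _ ≤ ‖x‖ ^ (p - 1) * ‖∑ k ∈ Finset.range p, w ^ k‖ *
          ‖x + y‖ := by
        apply mul_le_mul_of_nonneg_right _ h0
        simpa using mul_le_mul_of_nonneg_left hkey h1
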